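/- (Converse core inequality for CR source coding) Let X^n be i.i.d. with law P_X and let (S_e^n, S_d^n) be generated from (X^n, A^n) by a memoryless channel P_{S_e,S_d|X,A} where A^n is any function of X^n. Then H(X^n, S_e^n) − H(X^n, S_e^n | A^n) + H(X^n, S_e^n | A^n, S_d^n) ≥ ∑_{i=1}^n [I(X_i; A_i) + H(X_i, S_{e,i} | A_i, S_{d,i})]. -/

import Mathlib

open Finset
noncomputable section
namespace IT

variable {Ω : Type} [Fintype Ω]

/-- Marginal probability mass of the event `X = a` under the weight function `p`. -/
def marg {α : Type} [Fintype α] [DecidableEq α]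
    (p : Ω → ℝ) (X : Ω → α) (a : α) : ℝ :=
  ∑ ω, if X ω = a then p ω else 0

/-- Shannon entropy (natural logarithm) of the random variable `X`. -/
def ent {α : Type} [Fintype α] [DecidableEq α] (p : Ω → ℝ) (X : Ω → α) : ℝ :=
  ∑ a, Real.negMulLog (marg p X a)

/-- Conditional entropy `H(X | Y)`. -/
def condEnt {α β : Type} [Fintype α] [DecidableEq α] [Fintype β] [DecidableEq β]
    (p : Ω → ℝ) (X : Ω → α) (Y : Ω → β) : ℝ :=
  ent p (fun ω => (X ω, Y ω)) - ent p Y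

/-- Mutual information `I(X; Y)`. -/
def mi {α β : Type} [Fintype α] [DecidableEq α] [Fintype β] [DecidableEq β]
    (p : Ω → ℝ) (X : Ω → α) (Y : Ω → β) : ℝ :=
  ent p X + ent p Y - ent p (fun ω => (X ω, Y ω))

/-- Conditional mutual information `I(X; Y | Z)`. -/
def condMI {α β γ : Type} [Fintype α] [DecidableEq α] [Fintype β] [DecidableEq β]
    [Fintype γ] [DecidableEq γ]
    (p : Ω → ℝ) (X : Ω → α) (Y : Ω → β) (Z : Ω → γ) : ℝ :=
  condEnt p X Z + condEnt p Y Z - condEnt p (fun ω => (X ω, Y ω)) Z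

/-- `X` and `Y` are conditionally independent given `Z`:
`P(X=a, Z=c) ⬝ P(Y=b, Z=c) = P(X=a, Y=b, Z=c) ⬝ P(Z=c)`. -/
def CondIndep {α β γ : Type} [Fintype α] [DecidableEq α] [Fintype β] [DecidableEq β]
    [Fintype γ] [DecidableEq γ]
    (p : Ω → ℝ) (X : Ω → α) (Y : Ω → β) (Z : Ω → γ) : Prop :=
  ∀ a b c,
    marg p (fun ω => (X ω, Z ω)) (a, c) * marg p (fun ω => (Y ω, Z ω)) (b, c) =
    marg p (fun ω => (X ω, Y ω, Z ω)) (a, b, c) * marg p Z c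

/-- `p` is a probability mass function on `Ω`. -/
def IsProb (p : Ω → ℝ) : Prop := (∀ ω, 0 ≤ p ω) ∧ ∑ ω, p ω = 1

end IT

namespace ITAux
open IT Real

variable {Ω : Type} [Fintype Ω] {p : Ω → ℝ}

section basic
variable {α β : Type} [Fintype α] [DecidableEq α] [Fintype β] [DecidableEq β]

lemma marg_nonneg (hp : ∀ ω, 0 ≤ p ω) (Y : Ω → α) (a : α) : 0 ≤ marg p Y a := by
  unfold marg; exact Finset.sum_nonneg fun ω _ => by split <;> simp [hp ω]

lemma sum_marg (hp : ∑ ω, p ω = 1) (Y : Ω → α) : ∑ a, marg p Y a = 1 := by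
  unfold marg
  rw [Finset.sum_comm]
  rw [← hp]
  exact Finset.sum_congr rfl fun ω _ => by simp

lemma marg_comp (Y : Ω → α) (g : α → β) (b : β) :
    marg p (fun ω => g (Y ω)) b = ∑ a, if g a = b then marg p Y a else 0 := by
  unfold marg
  have key : ∀ ω, (if g (Y ω) = b then p ω else 0)
      = ∑ a, if g a = b then (if Y ω = a then p ω else 0) else 0 := by
    intro ω
    rw [Finset.sum_eq_single (Y ω)]
    · simp
    · intro a _ hne
      simp [Ne.symm hne]
    · simp
  calc (∑ ω : Ω, if g (Y ω) = b then p ω else 0)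
      = ∑ ω : Ω, ∑ a, if g a = b then (if Y ω = a then p ω else 0) else 0 :=
        Finset.sum_congr rfl fun ω _ => key ω
    _ = ∑ a, ∑ ω : Ω, if g a = b then (if Y ω = a then p ω else 0) else 0 :=
        Finset.sum_comm
    _ = _ := by
        refine Finset.sum_congr rfl fun a _ => ?_
        by_cases h : g a = b <;> simp [h, Finset.sum_ite, Finset.sum_const_zero]

lemma group_sum (Y : Ω → α) (g : α → β) (c : β → ℝ) :
    ∑ a, marg p Y a * c (g a) = ∑ b, marg p (fun ω => g (Y ω)) b * c b := by
  simp only [marg_comp Y g, Finset.sum_mul]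
  rw [Finset.sum_comm]
  refine Finset.sum_congr rfl fun a _ => ?_
  rw [Finset.sum_eq_single (g a)]
  · simp
  · intro b _ hne
    simp [Ne.symm hne]
  · simp

lemma marg_le_marg_comp (hp : ∀ ω, 0 ≤ p ω) (Y : Ω → α) (g : α → β) (a : α) :
    marg p Y a ≤ marg p (fun ω => g (Y ω)) (g a) := by
  rw [marg_comp Y g (g a)]
  have hle : ∀ a' ∈ univ, (0:ℝ) ≤ if g a' = g a then marg p Y a' else 0 := by
    intro a' _
    by_cases h : g a' = g a <;> simp [h, marg_nonneg hp]
  have := Finset.single_le_sum hle (Finset.mem_univ a)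
  rwa [if_pos rfl] at this

lemma ent_comp_inj (Y : Ω → α) (g : α → β) (hg : Function.Injective g) :
    ent p (fun ω => g (Y ω)) = ent p Y := by
  unfold ent
  have h0 : ∀ b ∈ univ \ univ.image g, Real.negMulLog (marg p (fun ω => g (Y ω)) b) = 0 := by
    intro b hb
    simp only [Finset.mem_sdiff, Finset.mem_image] at hb
    have : marg p (fun ω => g (Y ω)) b = 0 := by
      unfold marg
      refine Finset.sum_eq_zero fun ω _ => ?_
      have : g (Y ω) ≠ b := fun h => hb.2 ⟨Y ω, Finset.mem_univ _, h⟩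
      simp [this]
    simp [this]
  rw [← Finset.sum_subset (Finset.subset_univ (univ.image g)) (fun b _ hb => h0 b (by simp [hb]))]
  rw [Finset.sum_image (fun a _ a' _ h => hg h)]
  refine Finset.sum_congr rfl fun a _ => ?_
  congr 1
  unfold marg
  exact Finset.sum_congr rfl fun ω _ => by simp [hg.eq_iff]

lemma ent_subsingleton [Subsingleton α] (hp : ∑ ω, p ω = 1) (Y : Ω → α) :
    ent p Y = 0 := by
  unfold ent
  refine Finset.sum_eq_zero fun a _ => ?_
  have : marg p Y a = 1 := by
    unfold marg
    rw [← hp]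
    exact Finset.sum_congr rfl fun ω _ => by simp [Subsingleton.elim (Y ω) a]
  simp [this]

end basic

lemma negMulLog_prod {ι : Type*} [DecidableEq ι] (s : Finset ι) (f : ι → ℝ) :
    Real.negMulLog (∏ j ∈ s, f j) = ∑ j ∈ s, Real.negMulLog (f j) * ∏ k ∈ s.erase j, f k := by
  induction s using Finset.induction_on with
  | empty => simp
  | @insert a s ha ih =>
    rw [Finset.prod_insert ha, Real.negMulLog_mul, Finset.sum_insert ha, ih]
    rw [Finset.erase_insert ha, Finset.mul_sum]
    congr 1
    · ring
    · refine Finset.sum_congr rfl fun j hj => ?_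
      rw [Finset.erase_insert_of_ne (by rintro rfl; exact ha hj)]
      rw [Finset.prod_insert (by simp [ha, Finset.mem_erase])]
      ring

section fnsum
variable {ι E : Type*} [Fintype ι] [DecidableEq ι] [Fintype E] [DecidableEq E]

lemma sum_fn_prod (f : ι → E → ℝ) :
    ∑ xs : ι → E, ∏ j, f j (xs j) = ∏ j, ∑ x, f j x := by
  rw [← Fintype.prod_sum]

lemma sum_fn_prod_ite (f : ι → E → ℝ) (i : ι) (e : E) :
    ∑ xs : ι → E, (if xs i = e then ∏ j, f j (xs j) else 0)
      = f i e * ∏ j ∈ univ.erase i, ∑ x, f j x := by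
  set G : ι → E → ℝ := fun j x => if j = i then (if x = e then f j x else 0) else f j x with hG
  have key : ∀ xs : ι → E, (if xs i = e then ∏ j, f j (xs j) else 0) = ∏ j, G j (xs j) := by
    intro xs
    by_cases h : xs i = e
    · simp only [h, if_true]
      refine Finset.prod_congr rfl fun j _ => ?_
      by_cases hj : j = i <;> simp [hG, hj, h]
    · rw [if_neg h, eq_comm]
      apply Finset.prod_eq_zero (Finset.mem_univ i)
      simp [hG, h]
  rw [Finset.sum_congr rfl fun xs _ => key xs, sum_fn_prod G]
  rw [← Finset.mul_prod_erase univ _ (Finset.mem_univ i)]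
  congr 1
  · simp [hG]
  · refine Finset.prod_congr rfl fun j hj => ?_
    have hj' : j ≠ i := (Finset.mem_erase.1 hj).1
    refine Finset.sum_congr rfl fun x _ => ?_
    simp [hG, hj']

lemma sum_fn_single_prod (f : ι → E → ℝ) (g : E → ℝ) (i : ι) :
    ∑ xs : ι → E, g (xs i) * ∏ k ∈ univ.erase i, f k (xs k)
      = (∑ x, g x) * ∏ k ∈ univ.erase i, ∑ x, f k x := by
  set G : ι → E → ℝ := fun j x => if j = i then g x else f j x with hG
  have key : ∀ xs : ι → E, g (xs i) * ∏ k ∈ univ.erase i, f k (xs k) = ∏ j, G j (xs j) := by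
    intro xs
    rw [← Finset.mul_prod_erase univ _ (Finset.mem_univ i)]
    congr 1
    · simp [hG]
    · refine Finset.prod_congr rfl fun j hj => ?_
      have hj' : j ≠ i := (Finset.mem_erase.1 hj).1
      simp [hG, hj']
  rw [Finset.sum_congr rfl fun xs _ => key xs, sum_fn_prod G]
  rw [← Finset.mul_prod_erase univ _ (Finset.mem_univ i)]
  congr 1
  · simp [hG]
  · refine Finset.prod_congr rfl fun j hj => ?_
    have hj' : j ≠ i := (Finset.mem_erase.1 hj).1
    refine Finset.sum_congr rfl fun x _ => ?_
    simp [hG, hj']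

lemma sum_pair_fn {D : Type*} [Fintype D] [DecidableEq D] (G : (ι → E) → (ι → D) → ℝ) :
    (∑ es : ι → E, ∑ ds : ι → D, G es ds)
      = ∑ c : ι → E × D, G (fun j => (c j).1) (fun j => (c j).2) := by
  have h1 : ∑ q : (ι → E) × (ι → D), G q.1 q.2 = ∑ es : ι → E, ∑ ds : ι → D, G es ds :=
    Fintype.sum_prod_type _
  have h2 : ∑ c : ι → E × D, G (fun j => (c j).1) (fun j => (c j).2)
      = ∑ q : (ι → E) × (ι → D), G q.1 q.2 :=
    Equiv.sum_comp (Equiv.arrowProdEquivProdArrow ι (fun _ => E) (fun _ => D)) (fun q => G q.1 q.2)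
  rw [← h1, ← h2]

end fnsum

lemma gibbs {α : Type*} [Fintype α] (a b : α → ℝ)
    (ha : ∀ x, 0 ≤ a x) (hb : ∀ x, 0 ≤ b x)
    (hab : ∀ x, a x ≠ 0 → b x ≠ 0)
    (hsum : ∑ x, b x ≤ ∑ x, a x) :
    ∑ x, a x * Real.log (b x) ≤ ∑ x, a x * Real.log (a x) := by
  have key : ∀ x, a x * Real.log (b x) - a x * Real.log (a x) ≤ b x - a x := by
    intro x
    by_cases h : a x = 0
    · simp [h, hb x]
    · have hax : 0 < a x := lt_of_le_of_ne (ha x) (Ne.symm h)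
      have hbx : 0 < b x := lt_of_le_of_ne (hb x) (Ne.symm (hab x h))
      have h1 : Real.log (b x / a x) ≤ b x / a x - 1 :=
        Real.log_le_sub_one_of_pos (div_pos hbx hax)
      have h2 : Real.log (b x / a x) = Real.log (b x) - Real.log (a x) :=
        Real.log_div (ne_of_gt hbx) h
      have h3 := mul_le_mul_of_nonneg_left h1 (le_of_lt hax)
      rw [h2] at h3
      have h4 : a x * (b x / a x - 1) = b x - a x := by field_simp
      have h5 : a x * (Real.log (b x) - Real.log (a x))
          = a x * Real.log (b x) - a x * Real.log (a x) := by ring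
      linarith
  have := Finset.sum_le_sum (fun x (_ : x ∈ univ) => key x)
  rw [Finset.sum_sub_distrib, Finset.sum_sub_distrib] at this
  linarith

end ITAux

namespace ITAux

lemma sum_sum_ite_pair {A B : Type*} [Fintype A] [DecidableEq A] [Fintype B] [DecidableEq B]
    (x : A) (y : B) (G : A → B → ℝ) :
    ∑ a, ∑ b, (if (a, b) = (x, y) then G a b else 0) = G x y := by
  simp only [Prod.mk.injEq, ite_and]
  rw [Finset.sum_eq_single x]
  · simp
  · intro a _ hne
    refine Finset.sum_eq_zero fun b _ => ?_
    rw [if_neg hne]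
  · simp

lemma sum_sum_ite_pair' {A B : Type*} [Fintype A] [DecidableEq A] [Fintype B] [DecidableEq B]
    (x : A) (y : B) (G : A → B → ℝ) :
    ∑ a, ∑ b, (if a = x ∧ b = y then G a b else 0) = G x y := by
  have := sum_sum_ite_pair x y G
  simp only [Prod.mk.injEq] at this
  exact this

lemma sum_sum_ite_pick {A B : Type*} [Fintype A] [DecidableEq A] [Fintype B] [DecidableEq B]
    (x : A) (y : B) (G : A → B → ℝ) :
    ∑ a, ∑ b, (if x = a ∧ y = b then G a b else 0) = G x y := by
  rw [← sum_sum_ite_pair' x y G]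
  refine Finset.sum_congr rfl fun a _ => Finset.sum_congr rfl fun b _ => ?_
  congr 1
  apply propext
  constructor
  · rintro ⟨h1, h2⟩; exact ⟨h1.symm, h2.symm⟩
  · rintro ⟨h1, h2⟩; exact ⟨h1.symm, h2.symm⟩

end ITAux

namespace ITAux

lemma sum_swap4 {A B C D : Type*} [Fintype A] [Fintype B] [Fintype C] [Fintype D]
    (F : A → B → C → D → ℝ) :
    ∑ a : A, ∑ b : B, ∑ c : C, ∑ d : D, F a b c d
      = ∑ c : C, ∑ d : D, ∑ a : A, ∑ b : B, F a b c d := by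
  calc ∑ a : A, ∑ b : B, ∑ c : C, ∑ d : D, F a b c d
      = ∑ a : A, ∑ c : C, ∑ b : B, ∑ d : D, F a b c d :=
        Finset.sum_congr rfl fun a _ => Finset.sum_comm
    _ = ∑ c : C, ∑ a : A, ∑ b : B, ∑ d : D, F a b c d := Finset.sum_comm
    _ = ∑ c : C, ∑ a : A, ∑ d : D, ∑ b : B, F a b c d :=
        Finset.sum_congr rfl fun c _ => Finset.sum_congr rfl fun a _ => Finset.sum_comm
    _ = ∑ c : C, ∑ d : D, ∑ a : A, ∑ b : B, F a b c d :=
        Finset.sum_congr rfl fun c _ => Finset.sum_comm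

lemma sum_swap3 {A B C : Type*} [Fintype A] [Fintype B] [Fintype C]
    (F : A → B → C → ℝ) :
    ∑ a : A, ∑ b : B, ∑ c : C, F a b c = ∑ b : B, ∑ c : C, ∑ a : A, F a b c := by
  calc ∑ a : A, ∑ b : B, ∑ c : C, F a b c
      = ∑ b : B, ∑ a : A, ∑ c : C, F a b c := Finset.sum_comm
    _ = ∑ b : B, ∑ c : C, ∑ a : A, F a b c :=
        Finset.sum_congr rfl fun b _ => Finset.sum_comm

end ITAux

namespace ITAux
open IT Real

lemma aux_iid {Ω : Type} [Fintype Ω] {n : ℕ} {Xt : Type} [Fintype Xt] [DecidableEq Xt]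
    (p : Ω → ℝ) (hp1 : ∑ ω, p ω = 1) (Xv : Ω → Fin n → Xt) (PX : Xt → ℝ)
    (hiid : ∀ xs : Fin n → Xt, IT.marg p Xv xs = ∏ i, PX (xs i)) :
    IT.ent p Xv = ∑ i : Fin n, IT.ent p (fun ω => Xv ω i) := by
  set S : ℝ := ∑ x, PX x with hS
  have hSn : S ^ n = 1 := by
    calc S ^ n = ∏ _j : Fin n, S := by
          rw [Finset.prod_const, Finset.card_univ, Fintype.card_fin]
      _ = ∑ xs : Fin n → Xt, ∏ j, PX (xs j) := (sum_fn_prod (fun _ y => PX y)).symm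
      _ = ∑ xs : Fin n → Xt, IT.marg p Xv xs := by
          exact Finset.sum_congr rfl fun xs _ => (hiid xs).symm
      _ = 1 := sum_marg hp1 Xv
  set Q : Xt → ℝ := fun x => PX x * S ^ (n - 1) with hQ
  have hQm : ∀ (i : Fin n) (x : Xt), IT.marg p (fun ω => Xv ω i) x = Q x := by
    intro i x
    calc IT.marg p (fun ω => Xv ω i) x
        = ∑ xs : Fin n → Xt, if xs i = x then IT.marg p Xv xs else 0 :=
          marg_comp Xv (fun xs => xs i) x
      _ = ∑ xs : Fin n → Xt, if xs i = x then ∏ j, PX (xs j) else 0 := by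
          simp only [hiid]
      _ = PX x * ∏ _j ∈ univ.erase i, ∑ x', PX x' := sum_fn_prod_ite (fun _ y => PX y) i x
      _ = Q x := by
          rw [Finset.prod_const, Finset.card_erase_of_mem (Finset.mem_univ i),
            Finset.card_univ, Fintype.card_fin]
  have hQprod : ∀ xs : Fin n → Xt, ∏ j, Q (xs j) = ∏ j, PX (xs j) := by
    intro xs
    rw [hQ]
    rw [Finset.prod_mul_distrib, Finset.prod_const, Finset.card_univ, Fintype.card_fin]
    have : (S ^ (n - 1)) ^ n = 1 := by
      rw [← pow_mul, Nat.mul_comm, pow_mul, hSn, one_pow]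
    rw [this, mul_one]
  have hQ1 : ∀ _i : Fin n, ∑ x, Q x = 1 := by
    intro i
    have hn : 0 < n := i.pos
    rw [hQ]
    rw [← Finset.sum_mul, ← hS]
    calc S * S ^ (n - 1) = S ^ (1 + (n - 1)) := by rw [pow_add, pow_one]
      _ = 1 := by rw [show 1 + (n - 1) = n by omega, hSn]
  have hpick : ∀ i : Fin n, IT.ent p (fun ω => Xv ω i) = ∑ x, Real.negMulLog (Q x) := by
    intro i
    unfold IT.ent
    exact Finset.sum_congr rfl fun x _ => by rw [hQm i x]
  calc IT.ent p Xv = ∑ xs : Fin n → Xt, Real.negMulLog (∏ j, Q (xs j)) := by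
        unfold IT.ent
        refine Finset.sum_congr rfl fun xs _ => ?_
        rw [hiid xs, hQprod xs]
    _ = ∑ xs : Fin n → Xt, ∑ j, Real.negMulLog (Q (xs j)) * ∏ k ∈ univ.erase j, Q (xs k) := by
        exact Finset.sum_congr rfl fun xs _ => negMulLog_prod univ (fun j => Q (xs j))
    _ = ∑ j : Fin n, ∑ xs : Fin n → Xt,
          Real.negMulLog (Q (xs j)) * ∏ k ∈ univ.erase j, Q (xs k) := Finset.sum_comm
    _ = ∑ j : Fin n, (∑ x, Real.negMulLog (Q x)) * ∏ _k ∈ univ.erase j, ∑ x, Q x :=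
        Finset.sum_congr rfl fun j _ =>
          sum_fn_single_prod (fun _ y => Q y) (fun y => Real.negMulLog (Q y)) j
    _ = ∑ j : Fin n, ∑ x, Real.negMulLog (Q x) := by
        refine Finset.sum_congr rfl fun j _ => ?_
        rw [hQ1 j, Finset.prod_const, one_pow, mul_one]
    _ = ∑ i : Fin n, IT.ent p (fun ω => Xv ω i) :=
        Finset.sum_congr rfl fun i _ => (hpick i).symm


lemma ent_eq_neg_sum {Ω α : Type} [Fintype Ω] [Fintype α] [DecidableEq α]
    (p : Ω → ℝ) (Y : Ω → α) :
    IT.ent p Y = -∑ a, IT.marg p Y a * Real.log (IT.marg p Y a) := by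
  unfold IT.ent
  rw [← Finset.sum_neg_distrib]
  exact Finset.sum_congr rfl fun a _ => by rw [Real.negMulLog]; ring

lemma aux_sub {Ω : Type} [Fintype Ω] {n : ℕ} {At Dt : Type}
    [Fintype At] [DecidableEq At] [Fintype Dt] [DecidableEq Dt]
    (p : Ω → ℝ) (hp0 : ∀ ω, 0 ≤ p ω) (hp1 : ∑ ω, p ω = 1)
    (Av : Ω → Fin n → At) (Sdv : Ω → Fin n → Dt) :
    IT.ent p (fun ω => (Av ω, Sdv ω))
      ≤ IT.ent p Av
        + (∑ i : Fin n, IT.ent p (fun ω => (Av ω i, Sdv ω i))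
            - ∑ i : Fin n, IT.ent p (fun ω => Av ω i)) := by
  classical
  set Y : Ω → (Fin n → At) × (Fin n → Dt) := fun ω => (Av ω, Sdv ω) with hY
  set aD : (Fin n → At) × (Fin n → Dt) → ℝ := IT.marg p Y with haD
  set PA : (Fin n → At) → ℝ := IT.marg p Av with hPA
  set PADi : Fin n → At × Dt → ℝ := fun i q => IT.marg p (fun ω => (Av ω i, Sdv ω i)) q with hPADi
  set PAi : Fin n → At → ℝ := fun i a => IT.marg p (fun ω => Av ω i) a with hPAi
  set ρ : Fin n → At → Dt → ℝ :=
    fun i a d => if PAi i a = 0 then 0 else PADi i (a, d) / PAi i a with hρ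
  set b : (Fin n → At) × (Fin n → Dt) → ℝ :=
    fun q => PA q.1 * ∏ i, ρ i (q.1 i) (q.2 i) with hb
  -- basic marginal relations
  have hPA_le : ∀ q, aD q ≤ PA q.1 :=
    fun q => marg_le_marg_comp hp0 Y (fun q => q.1) q
  have hPADi_le : ∀ i q, aD q ≤ PADi i (q.1 i, q.2 i) :=
    fun i q => marg_le_marg_comp hp0 Y (fun q => (q.1 i, q.2 i)) q
  have hPAi_le : ∀ (i) (a : At) (d : Dt), PADi i (a, d) ≤ PAi i a :=
    fun i a d => marg_le_marg_comp hp0 (fun ω => (Av ω i, Sdv ω i)) (fun q => q.1) (a, d)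
  have haD0 : ∀ q, 0 ≤ aD q := fun q => marg_nonneg hp0 Y q
  have hPADi0 : ∀ i q, 0 ≤ PADi i q := fun i q => marg_nonneg hp0 _ q
  have hPAi0 : ∀ i a, 0 ≤ PAi i a := fun i a => marg_nonneg hp0 _ a
  have hρ0 : ∀ i a d, 0 ≤ ρ i a d := by
    intro i a d
    rw [hρ]
    dsimp only
    split
    · exact le_refl 0
    · exact div_nonneg (hPADi0 i (a, d)) (hPAi0 i a)
  have hb0 : ∀ q, 0 ≤ b q := by
    intro q
    exact mul_nonneg (marg_nonneg hp0 Av q.1)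
      (Finset.prod_nonneg fun i _ => hρ0 i (q.1 i) (q.2 i))
  -- sum of PADi over d equals PAi
  have hPADi_sum : ∀ i a, ∑ d, PADi i (a, d) = PAi i a := by
    intro i a
    have : IT.marg p (fun ω => Av ω i) a = ∑ d, PADi i (a, d) :=
      calc IT.marg p (fun ω => Av ω i) a
          = ∑ q : At × Dt, if q.1 = a then PADi i q else 0 :=
            marg_comp (fun ω => (Av ω i, Sdv ω i)) (fun q => q.1) a
        _ = ∑ a' : At, ∑ d : Dt, if a' = a then PADi i (a', d) else 0 := Fintype.sum_prod_type _
        _ = ∑ d, PADi i (a, d) := by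
            rw [Finset.sum_comm]
            refine Finset.sum_congr rfl fun d _ => ?_
            rw [Finset.sum_ite_eq' univ a (fun a' => PADi i (a', d))]
            simp
    rw [hPAi]
    exact this.symm
  -- positivity transfer
  have hab : ∀ q, aD q ≠ 0 → b q ≠ 0 := by
    intro q hq
    have hq' : 0 < aD q := lt_of_le_of_ne (haD0 q) (Ne.symm hq)
    have h1 : 0 < PA q.1 := lt_of_lt_of_le hq' (hPA_le q)
    have h2 : ∀ i, 0 < ρ i (q.1 i) (q.2 i) := by
      intro i
      have hpad : 0 < PADi i (q.1 i, q.2 i) := lt_of_lt_of_le hq' (hPADi_le i q)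
      have hpai : 0 < PAi i (q.1 i) := lt_of_lt_of_le hpad (hPAi_le i (q.1 i) (q.2 i))
      rw [hρ]
      dsimp only
      rw [if_neg (ne_of_gt hpai)]
      exact div_pos hpad hpai
    have : 0 < b q := mul_pos h1 (Finset.prod_pos fun i _ => h2 i)
    exact ne_of_gt this
  -- sum bound
  have hsumb : ∑ q, b q ≤ ∑ q, aD q := by
    rw [sum_marg hp1 Y]
    calc ∑ q, b q
        = ∑ as : Fin n → At, ∑ ds : Fin n → Dt, PA as * ∏ i, ρ i (as i) (ds i) :=
          Fintype.sum_prod_type _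
      _ = ∑ as : Fin n → At, PA as * ∏ i, ∑ d, ρ i (as i) d := by
          refine Finset.sum_congr rfl fun as _ => ?_
          rw [← Finset.mul_sum]
          congr 1
          exact sum_fn_prod (fun i d => ρ i (as i) d)
      _ ≤ ∑ as : Fin n → At, PA as := by
          refine Finset.sum_le_sum fun as _ => ?_
          refine mul_le_of_le_one_right (marg_nonneg hp0 Av as) ?_
          refine Finset.prod_le_one (fun i _ => Finset.sum_nonneg fun d _ => hρ0 i (as i) d) ?_
          intro i _
          rw [hρ]
          dsimp only
          by_cases h : PAi i (as i) = 0
          · simp [h]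
          · simp only [h, if_false]
            rw [← Finset.sum_div, hPADi_sum i (as i), div_self h]
      _ = 1 := sum_marg hp1 Av
  -- Gibbs
  have hgibbs := gibbs aD b haD0 hb0 hab hsumb
  -- expansion of log b
  have hexp : ∑ q, aD q * Real.log (b q)
      = ∑ q, aD q * (Real.log (PA q.1)
          + ∑ i, (Real.log (PADi i (q.1 i, q.2 i)) - Real.log (PAi i (q.1 i)))) := by
    refine Finset.sum_congr rfl fun q _ => ?_
    by_cases hq : aD q = 0
    · rw [hq]; ring
    · have hq' : 0 < aD q := lt_of_le_of_ne (haD0 q) (Ne.symm hq)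
      have h1 : 0 < PA q.1 := lt_of_lt_of_le hq' (hPA_le q)
      have hpad : ∀ i, 0 < PADi i (q.1 i, q.2 i) := fun i => lt_of_lt_of_le hq' (hPADi_le i q)
      have hpai : ∀ i, 0 < PAi i (q.1 i) :=
        fun i => lt_of_lt_of_le (hpad i) (hPAi_le i (q.1 i) (q.2 i))
      have hρeq : ∀ i, ρ i (q.1 i) (q.2 i) = PADi i (q.1 i, q.2 i) / PAi i (q.1 i) := by
        intro i
        rw [hρ]
        dsimp only
        rw [if_neg (ne_of_gt (hpai i))]
      have hρpos : ∀ i, 0 < ρ i (q.1 i) (q.2 i) := by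
        intro i
        rw [hρeq i]
        exact div_pos (hpad i) (hpai i)
      congr 1
      rw [hb]
      dsimp only
      rw [Real.log_mul (ne_of_gt h1) (ne_of_gt (Finset.prod_pos fun i _ => hρpos i))]
      congr 1
      rw [Real.log_prod (fun i _ => ne_of_gt (hρpos i))]
      refine Finset.sum_congr rfl fun i _ => ?_
      rw [hρeq i, Real.log_div (ne_of_gt (hpad i)) (ne_of_gt (hpai i))]
  -- regrouping
  have hgroup1 : ∑ q, aD q * Real.log (PA q.1) = ∑ as, PA as * Real.log (PA as) :=
    group_sum Y (fun q => q.1) (fun as => Real.log (PA as))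
  have hgroup2 : ∀ i, ∑ q, aD q * Real.log (PADi i (q.1 i, q.2 i))
      = ∑ y : At × Dt, PADi i y * Real.log (PADi i y) :=
    fun i => group_sum Y (fun q => (q.1 i, q.2 i)) (fun y => Real.log (PADi i y))
  have hgroup3 : ∀ i, ∑ q, aD q * Real.log (PAi i (q.1 i))
      = ∑ a : At, PAi i a * Real.log (PAi i a) :=
    fun i => group_sum Y (fun q => q.1 i) (fun a => Real.log (PAi i a))
  -- distribute
  have hdist : ∑ q, aD q * (Real.log (PA q.1)
          + ∑ i, (Real.log (PADi i (q.1 i, q.2 i)) - Real.log (PAi i (q.1 i))))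
      = (∑ q, aD q * Real.log (PA q.1))
        + ((∑ i, ∑ q, aD q * Real.log (PADi i (q.1 i, q.2 i)))
            - ∑ i, ∑ q, aD q * Real.log (PAi i (q.1 i))) := by
    simp only [mul_add, Finset.mul_sum, mul_sub, Finset.sum_add_distrib, Finset.sum_sub_distrib]
    congr 1
    congr 1
    · exact Finset.sum_comm
    · exact Finset.sum_comm
  -- entropies in terms of sums
  have hentY : IT.ent p Y = -∑ q, aD q * Real.log (aD q) := ent_eq_neg_sum p Y
  have hentA : IT.ent p Av = -∑ as, PA as * Real.log (PA as) := ent_eq_neg_sum p Av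
  have hentADi : ∀ i, IT.ent p (fun ω => (Av ω i, Sdv ω i))
      = -∑ y : At × Dt, PADi i y * Real.log (PADi i y) := fun i => ent_eq_neg_sum p _
  have hentAi : ∀ i, IT.ent p (fun ω => Av ω i)
      = -∑ a : At, PAi i a * Real.log (PAi i a) := fun i => ent_eq_neg_sum p _
  have hsum2 : ∑ i : Fin n, IT.ent p (fun ω => (Av ω i, Sdv ω i))
      = -∑ i, ∑ q, aD q * Real.log (PADi i (q.1 i, q.2 i)) := by
    rw [← Finset.sum_neg_distrib]
    exact Finset.sum_congr rfl fun i _ => by rw [hentADi i, hgroup2 i]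
  have hsum3 : ∑ i : Fin n, IT.ent p (fun ω => Av ω i)
      = -∑ i, ∑ q, aD q * Real.log (PAi i (q.1 i)) := by
    rw [← Finset.sum_neg_distrib]
    exact Finset.sum_congr rfl fun i _ => by rw [hentAi i, hgroup3 i]
  have final : IT.ent p Y ≤ IT.ent p Av
      + (∑ i : Fin n, IT.ent p (fun ω => (Av ω i, Sdv ω i))
          - ∑ i : Fin n, IT.ent p (fun ω => Av ω i)) := by
    rw [hexp, hdist, hgroup1] at hgibbs
    rw [hentY, hentA, hsum2, hsum3]
    linarith
  exact final


set_option maxHeartbeats 1000000 in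
lemma aux_mem {Ω : Type} [Fintype Ω] {n : ℕ} {Xt At Et Dt : Type}
    [Fintype Xt] [DecidableEq Xt] [Fintype At] [DecidableEq At]
    [Fintype Et] [DecidableEq Et] [Fintype Dt] [DecidableEq Dt]
    (p : Ω → ℝ)
    (Xv : Ω → Fin n → Xt) (Av : Ω → Fin n → At)
    (Sev : Ω → Fin n → Et) (Sdv : Ω → Fin n → Dt)
    (PS : Et × Dt → Xt → At → ℝ)
    (hmem : ∀ (xs : Fin n → Xt) (as_ : Fin n → At) (es : Fin n → Et) (ds : Fin n → Dt),
      IT.marg p (fun ω => (Xv ω, Av ω, Sev ω, Sdv ω)) (xs, as_, es, ds)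
        = IT.marg p (fun ω => (Xv ω, Av ω)) (xs, as_)
          * ∏ i, PS (es i, ds i) (xs i) (as_ i)) :
    IT.ent p (fun ω => ((Xv ω, Sev ω), (Av ω, Sdv ω)))
      = IT.ent p (fun ω => (Xv ω, Av ω))
        + (∑ i : Fin n, IT.ent p (fun ω => ((Xv ω i, Sev ω i), (Av ω i, Sdv ω i)))
            - ∑ i : Fin n, IT.ent p (fun ω => (Xv ω i, Av ω i))) := by
  classical
  set μ : (Fin n → Xt) × (Fin n → At) → ℝ := IT.marg p (fun ω => (Xv ω, Av ω)) with hμ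
  set T : Xt → At → ℝ := fun x a => ∑ ed : Et × Dt, PS ed x a with hT
  set L : Xt → At → ℝ := fun x a => ∑ ed : Et × Dt, Real.negMulLog (PS ed x a) with hL
  set m : Fin n → Xt → At → ℝ := fun i x a =>
    ∑ w : (Fin n → Xt) × (Fin n → At),
      if w.1 i = x ∧ w.2 i = a then μ w * ∏ j ∈ univ.erase i, T (w.1 j) (w.2 j) else 0 with hm
  -- (a) sum over (es, ds) of full product
  have hM0 : ∀ (xs : Fin n → Xt) (as_ : Fin n → At),
      (∑ es : Fin n → Et, ∑ ds : Fin n → Dt, ∏ j, PS (es j, ds j) (xs j) (as_ j))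
        = ∏ j, T (xs j) (as_ j) := by
    intro xs as_
    rw [sum_pair_fn (fun es ds => ∏ j, PS (es j, ds j) (xs j) (as_ j))]
    have h1 : ∀ c : Fin n → Et × Dt,
        (∏ j, PS ((c j).1, (c j).2) (xs j) (as_ j)) = ∏ j, PS (c j) (xs j) (as_ j) :=
      fun c => Finset.prod_congr rfl fun j _ => by rw [Prod.mk.eta]
    rw [Finset.sum_congr rfl fun c _ => h1 c]
    exact sum_fn_prod (fun j y => PS y (xs j) (as_ j))
  -- (b) sum over (es, ds) with coordinate i pinned
  have hM1 : ∀ (i : Fin n) (xs : Fin n → Xt) (as_ : Fin n → At) (e : Et) (d : Dt),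
      (∑ es : Fin n → Et, ∑ ds : Fin n → Dt,
          if es i = e ∧ ds i = d then ∏ j, PS (es j, ds j) (xs j) (as_ j) else 0)
        = PS (e, d) (xs i) (as_ i) * ∏ j ∈ univ.erase i, T (xs j) (as_ j) := by
    intro i xs as_ e d
    rw [sum_pair_fn (fun es ds =>
      if es i = e ∧ ds i = d then ∏ j, PS (es j, ds j) (xs j) (as_ j) else 0)]
    have h1 : ∀ c : Fin n → Et × Dt,
        (if (c i).1 = e ∧ (c i).2 = d then ∏ j, PS ((c j).1, (c j).2) (xs j) (as_ j) else 0)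
          = (if c i = (e, d) then ∏ j, PS (c j) (xs j) (as_ j) else 0) := by
      intro c
      refine if_congr ?_ ?_ rfl
      · rw [Prod.ext_iff]
      · exact Finset.prod_congr rfl fun j _ => by rw [Prod.mk.eta]
    rw [Finset.sum_congr rfl fun c _ => h1 c]
    exact sum_fn_prod_ite (fun j y => PS y (xs j) (as_ j)) i (e, d)
  -- (c) support fact
  have hμT : ∀ (xs : Fin n → Xt) (as_ : Fin n → At),
      μ (xs, as_) * ∏ j, T (xs j) (as_ j) = μ (xs, as_) := by
    intro xs as_
    have h1 : μ (xs, as_)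
        = ∑ v : (Fin n → Xt) × ((Fin n → At) × ((Fin n → Et) × (Fin n → Dt))),
            if (v.1, v.2.1) = (xs, as_)
            then IT.marg p (fun ω => (Xv ω, Av ω, Sev ω, Sdv ω)) v else 0 :=
      marg_comp (fun ω => (Xv ω, Av ω, Sev ω, Sdv ω)) (fun v => (v.1, v.2.1)) (xs, as_)
    have h2 : ∀ (xs' : Fin n → Xt) (as' : Fin n → At),
        (∑ es : Fin n → Et, ∑ ds : Fin n → Dt,
          if (xs', as') = (xs, as_)
          then IT.marg p (fun ω => (Xv ω, Av ω, Sev ω, Sdv ω)) (xs', as', es, ds) else 0)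
        = (if (xs', as') = (xs, as_) then μ (xs, as_) * ∏ j, T (xs j) (as_ j) else 0) := by
      intro xs' as'
      by_cases h : (xs', as') = (xs, as_)
      · have h' := h
        rw [Prod.mk.injEq] at h'
        obtain ⟨hx, ha⟩ := h'
        subst hx; subst ha
        simp only [if_pos h]
        simp only [hmem]
        calc ∑ es : Fin n → Et, ∑ ds : Fin n → Dt,
              μ (xs', as') * ∏ j, PS (es j, ds j) (xs' j) (as' j)
            = μ (xs', as') * ∑ es : Fin n → Et, ∑ ds : Fin n → Dt,
                ∏ j, PS (es j, ds j) (xs' j) (as' j) := by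
              simp only [← Finset.mul_sum]
          _ = μ (xs', as') * ∏ j, T (xs' j) (as' j) := by rw [hM0 xs' as']
      · simp only [h, if_false]
        exact Finset.sum_eq_zero fun es _ => Finset.sum_eq_zero fun ds _ => rfl
    have hkey : (∑ v : (Fin n → Xt) × ((Fin n → At) × ((Fin n → Et) × (Fin n → Dt))),
            if (v.1, v.2.1) = (xs, as_)
            then IT.marg p (fun ω => (Xv ω, Av ω, Sev ω, Sdv ω)) v else 0)
        = μ (xs, as_) * ∏ j, T (xs j) (as_ j) := by
      simp only [Fintype.sum_prod_type]
      rw [Finset.sum_congr rfl fun xs' _ => Finset.sum_congr rfl fun as' _ => h2 xs' as']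
      rw [sum_sum_ite_pair xs as_ (fun _ _ => μ (xs, as_) * ∏ j, T (xs j) (as_ j))]
    exact (h1.trans hkey).symm
  have hsupp : ∀ (xs : Fin n → Xt) (as_ : Fin n → At),
      μ (xs, as_) ≠ 0 → ∏ j, T (xs j) (as_ j) = 1 := by
    intro xs as_ hw
    have h := hμT xs as_
    exact mul_left_cancel₀ hw (h.trans (mul_one (μ (xs, as_))).symm)
  -- (e) single-letter four-tuple marginal
  have hq : ∀ (i : Fin n) (x : Xt) (e : Et) (a : At) (d : Dt),
      IT.marg p (fun ω => ((Xv ω i, Sev ω i), (Av ω i, Sdv ω i))) ((x, e), (a, d))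
        = PS (e, d) x a * m i x a := by
    intro i x e a d
    have h1 : IT.marg p (fun ω => ((Xv ω i, Sev ω i), (Av ω i, Sdv ω i))) ((x, e), (a, d))
        = ∑ v : (Fin n → Xt) × ((Fin n → At) × ((Fin n → Et) × (Fin n → Dt))),
            if ((v.1 i, v.2.2.1 i), (v.2.1 i, v.2.2.2 i)) = ((x, e), (a, d))
            then IT.marg p (fun ω => (Xv ω, Av ω, Sev ω, Sdv ω)) v else 0 :=
      marg_comp (fun ω => (Xv ω, Av ω, Sev ω, Sdv ω))
        (fun v => ((v.1 i, v.2.2.1 i), (v.2.1 i, v.2.2.2 i))) ((x, e), (a, d))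
    rw [h1]
    simp only [Fintype.sum_prod_type]
    have h2 : ∀ (xs' : Fin n → Xt) (as' : Fin n → At),
        (∑ es : Fin n → Et, ∑ ds : Fin n → Dt,
          if ((xs' i, es i), (as' i, ds i)) = ((x, e), (a, d))
          then IT.marg p (fun ω => (Xv ω, Av ω, Sev ω, Sdv ω)) (xs', as', es, ds) else 0)
        = (if xs' i = x ∧ as' i = a
            then PS (e, d) x a *
              (μ (xs', as') * ∏ k ∈ univ.erase i, T (xs' k) (as' k)) else 0) := by
      intro xs' as'
      by_cases hc : xs' i = x ∧ as' i = a
      · rw [if_pos hc]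
        simp only [hmem]
        have hcond : ∀ (es : Fin n → Et) (ds : Fin n → Dt),
            (((xs' i, es i), (as' i, ds i)) = ((x, e), (a, d))) = (es i = e ∧ ds i = d) := by
          intro es ds
          apply propext
          simp only [Prod.mk.injEq]
          constructor
          · rintro ⟨⟨_, h1⟩, _, h2⟩; exact ⟨h1, h2⟩
          · rintro ⟨h1, h2⟩; exact ⟨⟨hc.1, h1⟩, hc.2, h2⟩
        simp only [hcond]
        calc ∑ es : Fin n → Et, ∑ ds : Fin n → Dt,
              (if es i = e ∧ ds i = d
                then μ (xs', as') * ∏ j, PS (es j, ds j) (xs' j) (as' j) else 0)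
            = μ (xs', as') * ∑ es : Fin n → Et, ∑ ds : Fin n → Dt,
                (if es i = e ∧ ds i = d then ∏ j, PS (es j, ds j) (xs' j) (as' j) else 0) := by
              simp only [Finset.mul_sum, mul_ite, mul_zero]
          _ = μ (xs', as') * (PS (e, d) (xs' i) (as' i) * ∏ k ∈ univ.erase i, T (xs' k) (as' k)) := by
              rw [hM1 i xs' as' e d]
          _ = PS (e, d) x a * (μ (xs', as') * ∏ k ∈ univ.erase i, T (xs' k) (as' k)) := by
              rw [hc.1, hc.2]; ring
      · rw [if_neg hc]
        refine Finset.sum_eq_zero fun es _ => Finset.sum_eq_zero fun ds _ => ?_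
        rw [if_neg]
        intro hcon
        simp only [Prod.mk.injEq] at hcon
        exact hc ⟨hcon.1.1, hcon.2.1⟩
    rw [Finset.sum_congr rfl fun xs' _ => Finset.sum_congr rfl fun as' _ => h2 xs' as']
    have hmval : m i x a = ∑ xs' : Fin n → Xt, ∑ as' : Fin n → At,
        if xs' i = x ∧ as' i = a
        then μ (xs', as') * ∏ k ∈ univ.erase i, T (xs' k) (as' k) else 0 := by
      rw [hm]; exact Fintype.sum_prod_type _
    rw [hmval, Finset.mul_sum]
    refine Finset.sum_congr rfl fun xs' _ => ?_
    rw [Finset.mul_sum]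
    refine Finset.sum_congr rfl fun as' _ => ?_
    by_cases hc : xs' i = x ∧ as' i = a
    · rw [if_pos hc, if_pos hc]
    · rw [if_neg hc, if_neg hc, mul_zero]
  -- (f) single-letter pair marginal
  have hr : ∀ (i : Fin n) (x : Xt) (a : At),
      IT.marg p (fun ω => (Xv ω i, Av ω i)) (x, a) = T x a * m i x a := by
    intro i x a
    have h1 : IT.marg p (fun ω => (Xv ω i, Av ω i)) (x, a)
        = ∑ v : (Fin n → Xt) × ((Fin n → At) × ((Fin n → Et) × (Fin n → Dt))),
            if (v.1 i, v.2.1 i) = (x, a)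
            then IT.marg p (fun ω => (Xv ω, Av ω, Sev ω, Sdv ω)) v else 0 :=
      marg_comp (fun ω => (Xv ω, Av ω, Sev ω, Sdv ω)) (fun v => (v.1 i, v.2.1 i)) (x, a)
    rw [h1]
    simp only [Fintype.sum_prod_type]
    have h2 : ∀ (xs' : Fin n → Xt) (as' : Fin n → At),
        (∑ es : Fin n → Et, ∑ ds : Fin n → Dt,
          if (xs' i, as' i) = (x, a)
          then IT.marg p (fun ω => (Xv ω, Av ω, Sev ω, Sdv ω)) (xs', as', es, ds) else 0)
        = (if xs' i = x ∧ as' i = a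
            then T x a * (μ (xs', as') * ∏ k ∈ univ.erase i, T (xs' k) (as' k)) else 0) := by
      intro xs' as'
      by_cases hc : xs' i = x ∧ as' i = a
      · have hcp : (xs' i, as' i) = (x, a) := by rw [hc.1, hc.2]
        rw [if_pos hc]
        simp only [hcp, if_true]
        simp only [hmem]
        calc ∑ es : Fin n → Et, ∑ ds : Fin n → Dt,
              μ (xs', as') * ∏ j, PS (es j, ds j) (xs' j) (as' j)
            = μ (xs', as') * ∑ es : Fin n → Et, ∑ ds : Fin n → Dt,
                ∏ j, PS (es j, ds j) (xs' j) (as' j) := by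
              simp only [← Finset.mul_sum]
          _ = μ (xs', as') * ∏ j, T (xs' j) (as' j) := by rw [hM0 xs' as']
          _ = μ (xs', as') * (T (xs' i) (as' i) * ∏ k ∈ univ.erase i, T (xs' k) (as' k)) := by
              rw [Finset.mul_prod_erase univ (fun k => T (xs' k) (as' k)) (Finset.mem_univ i)]
          _ = T x a * (μ (xs', as') * ∏ k ∈ univ.erase i, T (xs' k) (as' k)) := by
              rw [hc.1, hc.2]; ring
      · rw [if_neg hc]
        refine Finset.sum_eq_zero fun es _ => Finset.sum_eq_zero fun ds _ => ?_
        rw [if_neg]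
        intro hcon
        simp only [Prod.mk.injEq] at hcon
        exact hc hcon
    rw [Finset.sum_congr rfl fun xs' _ => Finset.sum_congr rfl fun as' _ => h2 xs' as']
    have hmval : m i x a = ∑ xs' : Fin n → Xt, ∑ as' : Fin n → At,
        if xs' i = x ∧ as' i = a
        then μ (xs', as') * ∏ k ∈ univ.erase i, T (xs' k) (as' k) else 0 := by
      rw [hm]; exact Fintype.sum_prod_type _
    rw [hmval, Finset.mul_sum]
    refine Finset.sum_congr rfl fun xs' _ => ?_
    rw [Finset.mul_sum]
    refine Finset.sum_congr rfl fun as' _ => ?_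
    by_cases hc : xs' i = x ∧ as' i = a
    · rw [if_pos hc, if_pos hc]
    · rw [if_neg hc, if_neg hc, mul_zero]
  -- splits of L and T over pairs
  have hLsplit : ∀ x a, L x a = ∑ e : Et, ∑ d : Dt, Real.negMulLog (PS (e, d) x a) := by
    intro x a; rw [hL]; exact Fintype.sum_prod_type _
  have hTsplit : ∀ x a, T x a = ∑ e : Et, ∑ d : Dt, PS (e, d) x a := by
    intro x a; rw [hT]; exact Fintype.sum_prod_type _
  -- (g) inner negMulLog sum
  have hinner : ∀ (xs : Fin n → Xt) (as_ : Fin n → At),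
      (∑ es : Fin n → Et, ∑ ds : Fin n → Dt,
          Real.negMulLog (∏ j, PS (es j, ds j) (xs j) (as_ j)))
        = ∑ j, L (xs j) (as_ j) * ∏ k ∈ univ.erase j, T (xs k) (as_ k) := by
    intro xs as_
    rw [sum_pair_fn (fun es ds => Real.negMulLog (∏ j, PS (es j, ds j) (xs j) (as_ j)))]
    have h1 : ∀ c : Fin n → Et × Dt,
        Real.negMulLog (∏ j, PS ((c j).1, (c j).2) (xs j) (as_ j))
          = ∑ j, Real.negMulLog (PS (c j) (xs j) (as_ j))
              * ∏ k ∈ univ.erase j, PS (c k) (xs k) (as_ k) := by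
      intro c
      have h0 : (∏ j, PS ((c j).1, (c j).2) (xs j) (as_ j)) = ∏ j, PS (c j) (xs j) (as_ j) :=
        Finset.prod_congr rfl fun j _ => by rw [Prod.mk.eta]
      rw [h0, negMulLog_prod]
    rw [Finset.sum_congr rfl fun c _ => h1 c, Finset.sum_comm]
    refine Finset.sum_congr rfl fun j _ => ?_
    exact sum_fn_single_prod (fun k y => PS y (xs k) (as_ k))
      (fun y => Real.negMulLog (PS y (xs j) (as_ j))) j
  -- (h) big entropy
  have hE4 : IT.ent p (fun ω => ((Xv ω, Sev ω), (Av ω, Sdv ω)))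
      = (∑ xs : Fin n → Xt, ∑ as_ : Fin n → At, Real.negMulLog (μ (xs, as_)))
        + ∑ xs : Fin n → Xt, ∑ as_ : Fin n → At, μ (xs, as_)
            * ∑ j, L (xs j) (as_ j) * ∏ k ∈ univ.erase j, T (xs k) (as_ k) := by
    have e1 : IT.ent p (fun ω => ((Xv ω, Sev ω), (Av ω, Sdv ω)))
        = IT.ent p (fun ω => (Xv ω, Av ω, Sev ω, Sdv ω)) := by
      have hinj : Function.Injective
          (fun v : (Fin n → Xt) × ((Fin n → At) × ((Fin n → Et) × (Fin n → Dt))) =>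
            ((v.1, v.2.2.1), (v.2.1, v.2.2.2))) := by
        rintro ⟨a, b, c, d⟩ ⟨a', b', c', d'⟩ h
        simp only [Prod.mk.injEq] at h ⊢
        exact ⟨h.1.1, h.2.1, h.1.2, h.2.2⟩
      exact ent_comp_inj (fun ω => (Xv ω, Av ω, Sev ω, Sdv ω))
        (fun v => ((v.1, v.2.2.1), (v.2.1, v.2.2.2))) hinj
    rw [e1]
    unfold IT.ent
    simp only [Fintype.sum_prod_type]
    simp only [hmem]
    have h2 : ∀ (xs : Fin n → Xt) (as_ : Fin n → At),
        (∑ es : Fin n → Et, ∑ ds : Fin n → Dt,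
            Real.negMulLog (μ (xs, as_) * ∏ j, PS (es j, ds j) (xs j) (as_ j)))
          = Real.negMulLog (μ (xs, as_))
            + μ (xs, as_) * ∑ j, L (xs j) (as_ j) * ∏ k ∈ univ.erase j, T (xs k) (as_ k) := by
      intro xs as_
      calc ∑ es : Fin n → Et, ∑ ds : Fin n → Dt,
            Real.negMulLog (μ (xs, as_) * ∏ j, PS (es j, ds j) (xs j) (as_ j))
          = ∑ es : Fin n → Et, ∑ ds : Fin n → Dt,
              ((∏ j, PS (es j, ds j) (xs j) (as_ j)) * Real.negMulLog (μ (xs, as_))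
                + μ (xs, as_) * Real.negMulLog (∏ j, PS (es j, ds j) (xs j) (as_ j))) := by
            refine Finset.sum_congr rfl fun es _ => Finset.sum_congr rfl fun ds _ => ?_
            rw [Real.negMulLog_mul]
        _ = (∑ es : Fin n → Et, ∑ ds : Fin n → Dt, ∏ j, PS (es j, ds j) (xs j) (as_ j))
              * Real.negMulLog (μ (xs, as_))
            + μ (xs, as_) * ∑ es : Fin n → Et, ∑ ds : Fin n → Dt,
                Real.negMulLog (∏ j, PS (es j, ds j) (xs j) (as_ j)) := by
            simp only [Finset.sum_add_distrib, ← Finset.sum_mul, ← Finset.mul_sum]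
        _ = (∏ j, T (xs j) (as_ j)) * Real.negMulLog (μ (xs, as_))
            + μ (xs, as_) * ∑ j, L (xs j) (as_ j) * ∏ k ∈ univ.erase j, T (xs k) (as_ k) := by
            rw [hM0 xs as_, hinner xs as_]
        _ = Real.negMulLog (μ (xs, as_))
            + μ (xs, as_) * ∑ j, L (xs j) (as_ j) * ∏ k ∈ univ.erase j, T (xs k) (as_ k) := by
            by_cases hz : μ (xs, as_) = 0
            · rw [hz]; simp
            · rw [hsupp xs as_ hz, one_mul]
    rw [Finset.sum_congr rfl fun xs _ => Finset.sum_congr rfl fun as_ _ => h2 xs as_]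
    simp only [Finset.sum_add_distrib]
  -- entropy of the pair (Xv, Av)
  have hentW : IT.ent p (fun ω => (Xv ω, Av ω))
      = ∑ xs : Fin n → Xt, ∑ as_ : Fin n → At, Real.negMulLog (μ (xs, as_)) := by
    unfold IT.ent
    exact Fintype.sum_prod_type _
  -- (i) single-letter entropies
  have hS7a : ∀ i : Fin n, IT.ent p (fun ω => ((Xv ω i, Sev ω i), (Av ω i, Sdv ω i)))
      = ∑ x : Xt, ∑ a : At,
          (m i x a * L x a + T x a * Real.negMulLog (m i x a)) := by
    intro i
    unfold IT.ent
    simp only [Fintype.sum_prod_type]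
    simp only [hq i]
    rw [Finset.sum_congr rfl fun x _ => Finset.sum_comm]
    refine Finset.sum_congr rfl fun x _ => Finset.sum_congr rfl fun a _ => ?_
    calc ∑ e : Et, ∑ d : Dt, Real.negMulLog (PS (e, d) x a * m i x a)
        = ∑ e : Et, ∑ d : Dt,
            (m i x a * Real.negMulLog (PS (e, d) x a)
              + PS (e, d) x a * Real.negMulLog (m i x a)) := by
          refine Finset.sum_congr rfl fun e _ => Finset.sum_congr rfl fun d _ => ?_
          rw [Real.negMulLog_mul]
      _ = m i x a * (∑ e : Et, ∑ d : Dt, Real.negMulLog (PS (e, d) x a))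
          + (∑ e : Et, ∑ d : Dt, PS (e, d) x a) * Real.negMulLog (m i x a) := by
          simp only [Finset.sum_add_distrib, ← Finset.sum_mul, ← Finset.mul_sum]
      _ = m i x a * L x a + T x a * Real.negMulLog (m i x a) := by
          rw [← hLsplit x a, ← hTsplit x a]
  have hS7b : ∀ i : Fin n, IT.ent p (fun ω => (Xv ω i, Av ω i))
      = ∑ x : Xt, ∑ a : At,
          (m i x a * Real.negMulLog (T x a) + T x a * Real.negMulLog (m i x a)) := by
    intro i
    unfold IT.ent
    simp only [Fintype.sum_prod_type]
    simp only [hr i]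
    refine Finset.sum_congr rfl fun x _ => Finset.sum_congr rfl fun a _ => ?_
    rw [Real.negMulLog_mul]
  -- (j) exchange between single-letter m sums and joint sums
  have hS8 : ∀ c : Xt → At → ℝ,
      (∑ i : Fin n, ∑ x : Xt, ∑ a : At, m i x a * c x a)
        = ∑ xs : Fin n → Xt, ∑ as_ : Fin n → At, μ (xs, as_)
            * ∑ j, c (xs j) (as_ j) * ∏ k ∈ univ.erase j, T (xs k) (as_ k) := by
    intro c
    have hper : ∀ i : Fin n, (∑ x : Xt, ∑ a : At, m i x a * c x a)
        = ∑ xs : Fin n → Xt, ∑ as_ : Fin n → At, μ (xs, as_)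
            * (c (xs i) (as_ i) * ∏ k ∈ univ.erase i, T (xs k) (as_ k)) := by
      intro i
      have hmval : ∀ x a, m i x a = ∑ xs : Fin n → Xt, ∑ as_ : Fin n → At,
          if xs i = x ∧ as_ i = a
          then μ (xs, as_) * ∏ k ∈ univ.erase i, T (xs k) (as_ k) else 0 := by
        intro x a; rw [hm]; exact Fintype.sum_prod_type _
      calc ∑ x : Xt, ∑ a : At, m i x a * c x a
          = ∑ x : Xt, ∑ a : At, ∑ xs : Fin n → Xt, ∑ as_ : Fin n → At,
              (if xs i = x ∧ as_ i = a
                then μ (xs, as_) * ∏ k ∈ univ.erase i, T (xs k) (as_ k) else 0) * c x a := by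
            refine Finset.sum_congr rfl fun x _ => Finset.sum_congr rfl fun a _ => ?_
            rw [hmval x a, Finset.sum_mul]
            exact Finset.sum_congr rfl fun xs _ => by rw [Finset.sum_mul]
        _ = ∑ xs : Fin n → Xt, ∑ as_ : Fin n → At, ∑ x : Xt, ∑ a : At,
              (if xs i = x ∧ as_ i = a
                then μ (xs, as_) * ∏ k ∈ univ.erase i, T (xs k) (as_ k) else 0) * c x a :=
            sum_swap4 _
        _ = ∑ xs : Fin n → Xt, ∑ as_ : Fin n → At, μ (xs, as_)
              * (c (xs i) (as_ i) * ∏ k ∈ univ.erase i, T (xs k) (as_ k)) := by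
            refine Finset.sum_congr rfl fun xs _ => Finset.sum_congr rfl fun as_ _ => ?_
            simp only [ite_mul, zero_mul]
            rw [sum_sum_ite_pick (xs i) (as_ i)
              (fun x a => (μ (xs, as_) * ∏ k ∈ univ.erase i, T (xs k) (as_ k)) * c x a)]
            ring
    rw [Finset.sum_congr rfl fun i _ => hper i]
    rw [sum_swap3 _]
    refine Finset.sum_congr rfl fun xs _ => Finset.sum_congr rfl fun as_ _ => ?_
    rw [Finset.mul_sum]
  -- (k) the correction term vanishes
  have hS9 : (∑ xs : Fin n → Xt, ∑ as_ : Fin n → At, μ (xs, as_)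
      * ∑ j, Real.negMulLog (T (xs j) (as_ j)) * ∏ k ∈ univ.erase j, T (xs k) (as_ k)) = 0 := by
    refine Finset.sum_eq_zero fun xs _ => Finset.sum_eq_zero fun as_ _ => ?_
    by_cases hz : μ (xs, as_) = 0
    · rw [hz, zero_mul]
    · rw [← negMulLog_prod univ (fun j => T (xs j) (as_ j)), hsupp xs as_ hz]
      simp
  -- final assembly
  have hsum4 : ∑ i : Fin n, IT.ent p (fun ω => ((Xv ω i, Sev ω i), (Av ω i, Sdv ω i)))
      = (∑ i : Fin n, ∑ x : Xt, ∑ a : At, m i x a * L x a)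
        + ∑ i : Fin n, ∑ x : Xt, ∑ a : At, T x a * Real.negMulLog (m i x a) := by
    rw [← Finset.sum_add_distrib]
    refine Finset.sum_congr rfl fun i _ => ?_
    rw [hS7a i]
    simp only [Finset.sum_add_distrib]
  have hsumXA : ∑ i : Fin n, IT.ent p (fun ω => (Xv ω i, Av ω i))
      = (∑ i : Fin n, ∑ x : Xt, ∑ a : At, m i x a * Real.negMulLog (T x a))
        + ∑ i : Fin n, ∑ x : Xt, ∑ a : At, T x a * Real.negMulLog (m i x a) := by
    rw [← Finset.sum_add_distrib]
    refine Finset.sum_congr rfl fun i _ => ?_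
    rw [hS7b i]
    simp only [Finset.sum_add_distrib]
  have h8L := hS8 L
  have h8T := hS8 (fun x a => Real.negMulLog (T x a))
  rw [hE4, hentW, hsum4, hsumXA, h8L]
  rw [h8T] at *
  linarith [hS9]


end ITAux


/-- converse core inequality: with `X^n` i.i.d. `P_X`, `(S_e^n,S_d^n)`
generated memorylessly from `(X^n,A^n)` via `P_{S_e,S_d|X,A}`, and `A^n` a function of `X^n`:
`H(X^n,S_e^n) − H(X^n,S_e^n|A^n) + H(X^n,S_e^n|A^n,S_d^n)
  ≥ ∑ i [I(X_i;A_i) + H(X_i,S_{e,i}|A_i,S_{d,i})]`. -/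
theorem stmt12
    {Ω : Type} [Fintype Ω] {n : ℕ} {Xt At Et Dt : Type}
    [Fintype Xt] [DecidableEq Xt] [Fintype At] [DecidableEq At]
    [Fintype Et] [DecidableEq Et] [Fintype Dt] [DecidableEq Dt]
    (p : Ω → ℝ) (hp : IT.IsProb p)
    (Xv : Ω → Fin n → Xt) (Av : Ω → Fin n → At)
    (Sev : Ω → Fin n → Et) (Sdv : Ω → Fin n → Dt)
    (PX : Xt → ℝ) (PS : Et × Dt → Xt → At → ℝ)
    (hiid : ∀ xs : Fin n → Xt, IT.marg p Xv xs = ∏ i, PX (xs i))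
    (hmem : ∀ (xs : Fin n → Xt) (as_ : Fin n → At) (es : Fin n → Et) (ds : Fin n → Dt),
      IT.marg p (fun ω => (Xv ω, Av ω, Sev ω, Sdv ω)) (xs, as_, es, ds)
        = IT.marg p (fun ω => (Xv ω, Av ω)) (xs, as_)
          * ∏ i, PS (es i, ds i) (xs i) (as_ i))
    (hA : ∃ f : (Fin n → Xt) → (Fin n → At), ∀ ω, Av ω = f (Xv ω)) :
    IT.ent p (fun ω => (Xv ω, Sev ω))
      - IT.condEnt p (fun ω => (Xv ω, Sev ω)) Av
      + IT.condEnt p (fun ω => (Xv ω, Sev ω)) (fun ω => (Av ω, Sdv ω))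
    ≥ ∑ i : Fin n,
        (IT.mi p (fun ω => Xv ω i) (fun ω => Av ω i)
          + IT.condEnt p (fun ω => (Xv ω i, Sev ω i)) (fun ω => (Av ω i, Sdv ω i))) := by
  obtain ⟨hp0, hp1⟩ := hp
  obtain ⟨f, hf⟩ := hA
  simp only [IT.mi, IT.condEnt, ge_iff_le, Finset.sum_add_distrib, Finset.sum_sub_distrib]
  have hE2 : IT.ent p (fun ω => ((Xv ω, Sev ω), Av ω)) = IT.ent p (fun ω => (Xv ω, Sev ω)) := by
    have h : (fun ω => ((Xv ω, Sev ω), Av ω))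
        = fun ω => ((fun q : (Fin n → Xt) × (Fin n → Et) => (q, f q.1)) ((Xv ω, Sev ω))) := by
      funext ω
      simp only
      rw [hf ω]
    rw [h]
    exact ITAux.ent_comp_inj (fun ω => (Xv ω, Sev ω)) (fun q => (q, f q.1))
      (fun a b hab => congrArg Prod.fst hab)
  have hMEM : IT.ent p (fun ω => ((Xv ω, Sev ω), (Av ω, Sdv ω)))
      = IT.ent p (fun ω => (Xv ω, Av ω))
        + (∑ i : Fin n, IT.ent p (fun ω => ((Xv ω i, Sev ω i), (Av ω i, Sdv ω i)))
            - ∑ i : Fin n, IT.ent p (fun ω => (Xv ω i, Av ω i))) :=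
    ITAux.aux_mem p Xv Av Sev Sdv PS hmem
  have hIID : IT.ent p (fun ω => (Xv ω, Av ω)) = ∑ i : Fin n, IT.ent p (fun ω => Xv ω i) := by
    have h1 : IT.ent p (fun ω => (Xv ω, Av ω)) = IT.ent p Xv := by
      have h : (fun ω => (Xv ω, Av ω)) = fun ω => ((fun xs => (xs, f xs)) (Xv ω)) := by
        funext ω
        simp only
        rw [hf ω]
      rw [h]
      exact ITAux.ent_comp_inj Xv (fun xs => (xs, f xs)) (fun a b hab => congrArg Prod.fst hab)
    rw [h1]
    exact ITAux.aux_iid p hp1 Xv PX hiid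
  have hSUB : IT.ent p (fun ω => (Av ω, Sdv ω))
      ≤ IT.ent p Av
        + (∑ i : Fin n, IT.ent p (fun ω => (Av ω i, Sdv ω i))
            - ∑ i : Fin n, IT.ent p (fun ω => Av ω i)) :=
    ITAux.aux_sub p hp0 hp1 Av Sdv
  linarith
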